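/- arXiv:2003.02915 — 2 statements merged into one kernel-verified Lean document; each statement's English description precedes it below -/
import Mathlib

section
/- For n ≥ 3, the set partitions of [n] with exactly k blocks avoiding both 1/23 and 13/2 are exactly those whose RGF is 1^{n-k+1} 2 3 ⋯ k; in particular there is exactly one such partition for each 1 ≤ k ≤ n. -/
open Finset Polynomial

/-- Set partitions of `[n] = {1, …, n}`, modeled as finpartitions of `Fin n`. -/
abbrev SP (n : ℕ) := Finpartition (Finset.univ : Finset (Fin n))

noncomputable instance (n : ℕ) : Fintype (SP n) :=
  Fintype.ofInjective Finpartition.parts fun _ _ h => Finpartition.ext h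

/-- `i` and `j` lie in the same block of the set partition `P`. -/
def inSameBlock {n : ℕ} (P : SP n) (i j : Fin n) : Prop :=
  ∃ B ∈ P.parts, i ∈ B ∧ j ∈ B

/-- `P` avoids the pattern `1/2/3`: no three elements lie in three pairwise distinct blocks. -/
def avoids1_2_3 {n : ℕ} (P : SP n) : Prop :=
  ¬ ∃ a b c : Fin n, a < b ∧ b < c ∧
    ¬ inSameBlock P a b ∧ ¬ inSameBlock P b c ∧ ¬ inSameBlock P a c

/-- `P` avoids the pattern `13/2`. -/
def avoids13_2 {n : ℕ} (P : SP n) : Prop :=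
  ¬ ∃ a b c : Fin n, a < b ∧ b < c ∧ inSameBlock P a c ∧ ¬ inSameBlock P a b

/-- `P` avoids the pattern `1/23`. -/
def avoids1_23 {n : ℕ} (P : SP n) : Prop :=
  ¬ ∃ a b c : Fin n, a < b ∧ b < c ∧ inSameBlock P b c ∧ ¬ inSameBlock P a b

/-- `P` avoids the pattern `12/3`. -/
def avoids12_3 {n : ℕ} (P : SP n) : Prop :=
  ¬ ∃ a b c : Fin n, a < b ∧ b < c ∧ inSameBlock P a b ∧ ¬ inSameBlock P a c

/-- `P` avoids the pattern `123`: every block has at most two elements. -/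
def avoids123 {n : ℕ} (P : SP n) : Prop :=
  ∀ B ∈ P.parts, B.card ≤ 2

/-- The block of `P` containing `i`. -/
def blockOf {n : ℕ} (P : SP n) (i : Fin n) : Finset (Fin n) :=
  (P.parts.filter (fun B => i ∈ B)).sup id

/-- The restricted growth function of `P`: the letter at position `i` is the index
(starting from 1) of the block containing `i`, blocks being ordered by increasing minima. -/
def rgf {n : ℕ} (P : SP n) (i : Fin n) : ℕ :=
  (P.parts.filter (fun B => B.min ≤ (blockOf P i).min)).card

/-- The left-bigger statistic of Wachs and White. -/
def lbStat {n : ℕ} (w : Fin n → ℕ) : ℕ :=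
  ∑ j : Fin n, (((Finset.univ.filter (fun i => i < j)).image w).filter (fun v => w j < v)).card

/-- The left-smaller statistic of Wachs and White. -/
def lsStat {n : ℕ} (w : Fin n → ℕ) : ℕ :=
  ∑ j : Fin n, (((Finset.univ.filter (fun i => i < j)).image w).filter (fun v => v < w j)).card

/-- The right-bigger statistic of Wachs and White. -/
def rbStat {n : ℕ} (w : Fin n → ℕ) : ℕ :=
  ∑ j : Fin n, (((Finset.univ.filter (fun i => j < i)).image w).filter (fun v => w j < v)).card

/-- The right-smaller statistic of Wachs and White. -/
def rsStat {n : ℕ} (w : Fin n → ℕ) : ℕ :=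
  ∑ j : Fin n, (((Finset.univ.filter (fun i => j < i)).image w).filter (fun v => v < w j)).card

open Classical in
/-- The generating function `∑ q^{stat(π)}` over `k`-block partitions of `[n]` avoiding
a given family of patterns (described by the avoidance predicate `avoid`). -/
noncomputable def genPoly (n k : ℕ) (avoid : SP n → Prop) (stat : (Fin n → ℕ) → ℕ) :
    Polynomial ℕ :=
  ∑ P ∈ Finset.univ.filter (fun P : SP n => P.parts.card = k ∧ avoid P),
    Polynomial.X ^ (stat (rgf P))


namespace Aux
open scoped Classical

variable {n : ℕ} {P P' : SP n} {i j : Fin n}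

lemma blockOf_eq_part (P : SP n) (i : Fin n) : blockOf P i = P.part i := by
  have h : P.parts.filter (fun B => i ∈ B) = {P.part i} := by
    ext B
    simp only [mem_filter, mem_singleton]
    constructor
    · rintro ⟨hB, hiB⟩; exact (P.part_eq_of_mem hB hiB).symm
    · rintro rfl; exact ⟨P.part_mem.2 (mem_univ i), P.mem_part (mem_univ i)⟩
  rw [blockOf, h, sup_singleton]; rfl

lemma inSameBlock_iff_part_eq : inSameBlock P i j ↔ P.part i = P.part j := by
  constructor
  · rintro ⟨B, hB, hi, hj⟩
    rw [P.part_eq_of_mem hB hi, P.part_eq_of_mem hB hj]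
  · intro h
    exact ⟨P.part i, P.part_mem.2 (mem_univ i), P.mem_part (mem_univ i),
      h ▸ P.mem_part (mem_univ j)⟩

lemma part_eq_filter (P : SP n) (i : Fin n) :
    P.part i = univ.filter (fun j => inSameBlock P i j) := by
  ext j
  simp only [mem_filter, mem_univ, true_and]
  constructor
  · intro hj
    exact ⟨P.part i, P.part_mem.2 (mem_univ i), P.mem_part (mem_univ i), hj⟩
  · rintro ⟨B, hB, hi, hj⟩
    rw [P.part_eq_of_mem hB hi]; exact hj

lemma parts_eq_image (P : SP n) : P.parts = univ.image (fun i => P.part i) := by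
  ext B
  simp only [mem_image, mem_univ, true_and]
  constructor
  · intro hB
    obtain ⟨x, hx⟩ := P.nonempty_of_mem_parts hB
    exact ⟨x, P.part_eq_of_mem hB hx⟩
  · rintro ⟨x, rfl⟩
    exact P.part_mem.2 (mem_univ x)

lemma ext_of_inSameBlock (h : ∀ i j, inSameBlock P i j ↔ inSameBlock P' i j) : P = P' := by
  apply Finpartition.ext
  rw [parts_eq_image P, parts_eq_image P']
  congr 1
  funext i
  rw [part_eq_filter, part_eq_filter]
  ext j
  simp [h i j]

lemma eq_of_min_eq {B C : Finset (Fin n)} (hB : B ∈ P.parts) (hC : C ∈ P.parts)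
    (h : B.min = C.min) : B = C := by
  obtain ⟨b, hb⟩ := P.nonempty_of_mem_parts hB
  have h1 : (↑(B.min' ⟨b, hb⟩) : WithTop (Fin n)) = B.min := coe_min' _
  have h2 : B.min' ⟨b, hb⟩ ∈ C := mem_of_min (by rw [← h, ← h1])
  exact P.eq_of_mem_parts hB hC (B.min'_mem _) h2

lemma count_lt {B C : Finset (Fin n)} (hC : C ∈ P.parts) (h : B.min < C.min) :
    (P.parts.filter (fun D => D.min ≤ B.min)).card <
      (P.parts.filter (fun D => D.min ≤ C.min)).card := by
  apply card_lt_card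
  constructor
  · intro D hD
    rw [mem_filter] at hD ⊢
    exact ⟨hD.1, le_trans hD.2 h.le⟩
  · intro hsub
    have := hsub (mem_filter.2 ⟨hC, le_refl _⟩)
    exact absurd (mem_filter.1 this).2 (not_le.2 h)

lemma rgf_eq_iff : rgf P i = rgf P j ↔ inSameBlock P i j := by
  rw [rgf, rgf, blockOf_eq_part, blockOf_eq_part, inSameBlock_iff_part_eq]
  constructor
  · intro h
    rcases lt_trichotomy (P.part i).min (P.part j).min with hlt | heq | hgt
    · exact absurd h (count_lt (P.part_mem.2 (mem_univ j)) hlt).ne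
    · exact eq_of_min_eq (P.part_mem.2 (mem_univ i)) (P.part_mem.2 (mem_univ j)) heq
    · exact absurd h.symm (count_lt (P.part_mem.2 (mem_univ i)) hgt).ne
  · intro h; rw [h]

end Aux

def canS (n m : ℕ) : Setoid (Fin n) where
  r i j := (i.val ≤ m ∧ j.val ≤ m) ∨ i = j
  iseqv := by
    constructor
    · intro x; exact Or.inr rfl
    · intro x y h; rcases h with ⟨h1, h2⟩ | rfl
      exacts [Or.inl ⟨h2, h1⟩, Or.inr rfl]
    · intro x y z h h'
      rcases h with ⟨h1, h2⟩ | rfl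
      · rcases h' with ⟨h3, h4⟩ | rfl
        · exact Or.inl ⟨h1, h4⟩
        · exact Or.inl ⟨h1, h2⟩
      · exact h'

instance (n m : ℕ) : DecidableRel (canS n m).r := fun i j =>
  inferInstanceAs (Decidable ((i.val ≤ m ∧ j.val ≤ m) ∨ i = j))

noncomputable def canQ (n m : ℕ) : SP n := Finpartition.ofSetoid (canS n m)

namespace Aux

variable {n m : ℕ} {i j : Fin n}

lemma mem_part_canQ : j ∈ (canQ n m).part i ↔ ((i.val ≤ m ∧ j.val ≤ m) ∨ i = j) :=
  Finpartition.mem_part_ofSetoid_iff_rel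

lemma inSameBlock_canQ :
    inSameBlock (canQ n m) i j ↔ ((i.val ≤ m ∧ j.val ≤ m) ∨ i = j) := by
  rw [inSameBlock_iff_part_eq]
  rw [← Finpartition.mem_part_iff_part_eq_part _ (mem_univ i) (mem_univ j)]
  have := @mem_part_canQ n m j i
  rw [this]
  constructor
  · rintro (⟨h1, h2⟩ | rfl)
    exacts [Or.inl ⟨h2, h1⟩, Or.inr rfl]
  · rintro (⟨h1, h2⟩ | rfl)
    exacts [Or.inl ⟨h2, h1⟩, Or.inr rfl]

lemma part_canQ_of_le (hm : m < n) (h : i.val ≤ m) :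
    (canQ n m).part i = Iic (⟨m, hm⟩ : Fin n) := by
  ext j
  rw [mem_part_canQ, mem_Iic, Fin.le_def]
  constructor
  · rintro (⟨_, h2⟩ | rfl)
    exacts [h2, h]
  · intro hj; exact Or.inl ⟨h, hj⟩

lemma part_canQ_of_gt (h : m < i.val) : (canQ n m).part i = {i} := by
  ext j
  rw [mem_part_canQ, mem_singleton]
  constructor
  · rintro (⟨h1, _⟩ | rfl)
    · omega
    · rfl
  · rintro rfl; exact Or.inr rfl

lemma parts_canQ (hm : m < n) : (canQ n m).parts =
    insert (Iic (⟨m, hm⟩ : Fin n))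
      ((Ioi (⟨m, hm⟩ : Fin n)).image fun j => ({j} : Finset (Fin n))) := by
  rw [parts_eq_image]
  ext B
  simp only [mem_image, mem_univ, true_and, mem_insert]
  constructor
  · rintro ⟨x, rfl⟩
    by_cases hx : x.val ≤ m
    · exact Or.inl (part_canQ_of_le hm hx)
    · exact Or.inr ⟨x, by rw [mem_Ioi, Fin.lt_def]; show m < x.val; omega, (part_canQ_of_gt (by omega)).symm⟩
  · rintro (rfl | ⟨x, hx, rfl⟩)
    · exact ⟨⟨m, hm⟩, part_canQ_of_le hm (le_refl m)⟩
    · rw [mem_Ioi, Fin.lt_def] at hx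
      exact ⟨x, part_canQ_of_gt hx⟩

lemma Iic_not_mem_image (hm : m < n) :
    (Iic (⟨m, hm⟩ : Fin n)) ∉ (Ioi (⟨m, hm⟩ : Fin n)).image (fun j => ({j} : Finset (Fin n))) := by
  rw [mem_image]
  rintro ⟨x, hx, hEq⟩
  rw [mem_Ioi, Fin.lt_def] at hx
  have h0 : (⟨0, by omega⟩ : Fin n) ∈ Iic (⟨m, hm⟩ : Fin n) := by
    rw [mem_Iic, Fin.le_def]; exact Nat.zero_le _
  rw [← hEq, mem_singleton] at h0
  have : (0 : ℕ) = x.val := congrArg Fin.val h0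
  omega

lemma card_parts_canQ (hm : m < n) : (canQ n m).parts.card = n - m := by
  rw [parts_canQ hm, card_insert_of_notMem (Iic_not_mem_image hm),
    card_image_of_injective _ (fun a b h => singleton_inj.1 h), Fin.card_Ioi]
  simp only [Fin.val_mk]
  omega

lemma min_Iic (hm : m < n) : (Iic (⟨m, hm⟩ : Fin n)).min = ((⟨0, by omega⟩ : Fin n) : WithTop (Fin n)) := by
  apply le_antisymm
  · exact min_le (by rw [mem_Iic, Fin.le_def]; exact Nat.zero_le _)
  · exact Finset.le_min fun b _ => by
      rw [WithTop.coe_le_coe, Fin.le_def]; exact Nat.zero_le _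

lemma rgf_canQ (hm : m < n) (i : Fin n) :
    rgf (canQ n m) i = if i.val ≤ m then 1 else i.val - m + 1 := by
  rw [rgf, blockOf_eq_part]
  by_cases h : i.val ≤ m
  · rw [if_pos h, part_canQ_of_le hm h, min_Iic hm]
    have hfil : (canQ n m).parts.filter
        (fun B => B.min ≤ ((⟨0, by omega⟩ : Fin n) : WithTop (Fin n)))
        = {Iic (⟨m, hm⟩ : Fin n)} := by
      ext B
      rw [mem_filter, mem_singleton, parts_canQ hm, mem_insert]
      constructor
      · rintro ⟨rfl | hB, hmin⟩
        · rfl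
        · exfalso
          rw [mem_image] at hB
          obtain ⟨x, hx, rfl⟩ := hB
          rw [mem_Ioi, Fin.lt_def] at hx
          rw [min_singleton, WithTop.coe_le_coe, Fin.le_def] at hmin
          simp only [Fin.val_zero] at hmin
          omega
      · rintro rfl
        exact ⟨Or.inl rfl, by rw [min_Iic hm]⟩
    rw [hfil, card_singleton]
  · rw [if_neg h, part_canQ_of_gt (by omega), min_singleton]
    have hfil : (canQ n m).parts.filter (fun B => B.min ≤ (i : WithTop (Fin n)))
        = insert (Iic (⟨m, hm⟩ : Fin n))
            ((Ioc (⟨m, hm⟩ : Fin n) i).image fun j => ({j} : Finset (Fin n))) := by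
      ext B
      rw [mem_filter, parts_canQ hm, mem_insert, mem_insert]
      constructor
      · rintro ⟨rfl | hB, hmin⟩
        · exact Or.inl rfl
        · rw [mem_image] at hB
          obtain ⟨x, hx, rfl⟩ := hB
          rw [mem_Ioi] at hx
          rw [min_singleton, WithTop.coe_le_coe] at hmin
          exact Or.inr (mem_image.2 ⟨x, mem_Ioc.2 ⟨hx, hmin⟩, rfl⟩)
      · rintro (rfl | hB)
        · refine ⟨Or.inl rfl, ?_⟩
          rw [min_Iic hm, WithTop.coe_le_coe, Fin.le_def]
          exact Nat.zero_le _
        · rw [mem_image] at hB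
          obtain ⟨x, hx, rfl⟩ := hB
          rw [mem_Ioc] at hx
          refine ⟨Or.inr (mem_image.2 ⟨x, mem_Ioi.2 hx.1, rfl⟩), ?_⟩
          rw [min_singleton, WithTop.coe_le_coe]
          exact hx.2
    rw [hfil]
    have hnm : Iic (⟨m, hm⟩ : Fin n) ∉
        (Ioc (⟨m, hm⟩ : Fin n) i).image (fun j => ({j} : Finset (Fin n))) := by
      intro hmem
      exact Iic_not_mem_image hm (image_subset_image Ioc_subset_Ioi_self hmem)
    rw [card_insert_of_notMem hnm,
      card_image_of_injective _ (fun a b hab => singleton_inj.1 hab), Fin.card_Ioc]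

end Aux

namespace Aux

variable {n : ℕ} {P : SP n} {a b c : Fin n}

lemma not1_23 (h1 : avoids1_23 P) (hab : a < b) (hbc : b < c)
    (h : inSameBlock P b c) : inSameBlock P a b := by
  by_contra hn; exact h1 ⟨a, b, c, hab, hbc, h, hn⟩

lemma not13_2 (h2 : avoids13_2 P) (hab : a < b) (hbc : b < c)
    (h : inSameBlock P a c) : inSameBlock P a b := by
  by_contra hn; exact h2 ⟨a, b, c, hab, hbc, h, hn⟩

lemma mem_of_inSameBlock {B : Finset (Fin n)} (hB : B ∈ P.parts) (hb : b ∈ B)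
    (h : inSameBlock P a b) : a ∈ B := by
  obtain ⟨C, hC, haC, hbC⟩ := h
  rwa [P.eq_of_mem_parts hC hB hbC hb] at haC

lemma downward_closed (h1 : avoids1_23 P) (h2 : avoids13_2 P) {B : Finset (Fin n)}
    (hB : B ∈ P.parts) (hc2 : 2 ≤ B.card) (hab : a ≤ b) (hb : b ∈ B) : a ∈ B := by
  rcases eq_or_lt_of_le hab with rfl | hab'
  · exact hb
  obtain ⟨c, hc, hcb⟩ := Finset.exists_mem_ne hc2 b
  rcases lt_or_gt_of_ne hcb with hlt | hgt
  · rcases lt_trichotomy a c with h' | rfl | h'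
    · exact mem_of_inSameBlock hB hc (not1_23 h1 h' hlt ⟨B, hB, hc, hb⟩)
    · exact hc
    · obtain ⟨C, hC, hcC, haC⟩ := not13_2 h2 h' hab' ⟨B, hB, hc, hb⟩
      rwa [P.eq_of_mem_parts hC hB hcC hc] at haC
  · exact mem_of_inSameBlock hB hb (not1_23 h1 hab' hgt ⟨B, hB, hb, hc⟩)

lemma avoids1_23_canQ {m : ℕ} : avoids1_23 (canQ n m) := by
  rintro ⟨a, b, c, hab, hbc, hsbc, hnab⟩
  rcases inSameBlock_canQ.1 hsbc with ⟨hb, hc⟩ | rfl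
  · refine hnab (inSameBlock_canQ.2 (Or.inl ⟨?_, hb⟩))
    have := Fin.lt_def.1 hab; omega
  · exact lt_irrefl _ hbc

lemma avoids13_2_canQ {m : ℕ} : avoids13_2 (canQ n m) := by
  rintro ⟨a, b, c, hab, hbc, hsac, hnab⟩
  rcases inSameBlock_canQ.1 hsac with ⟨ha, hc⟩ | rfl
  · refine hnab (inSameBlock_canQ.2 (Or.inl ⟨ha, ?_⟩))
    have := Fin.lt_def.1 hbc; omega
  · exact lt_irrefl _ (hab.trans hbc)

lemma eq_canQ_of_avoid {k : ℕ} (hk1 : 1 ≤ k) (hkn : k ≤ n) (hn0 : 0 < n)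
    (hcard : P.parts.card = k) (h1 : avoids1_23 P) (h2 : avoids13_2 P) :
    P = canQ n (n - k) := by
  set z : Fin n := ⟨0, hn0⟩ with hzdef
  have hB0mem : P.part z ∈ P.parts := P.part_mem.2 (mem_univ z)
  have hzB0 : z ∈ P.part z := P.mem_part (mem_univ z)
  have dc0 : ∀ a b : Fin n, a ≤ b → b ∈ P.part z → a ∈ P.part z := by
    intro a b hab hb
    by_cases hc : 2 ≤ (P.part z).card
    · exact downward_closed h1 h2 hB0mem hc hab hb
    · have hpos : 0 < (P.part z).card := card_pos.2 ⟨z, hzB0⟩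
      have hone : (P.part z).card = 1 := by omega
      obtain ⟨x, hx⟩ := Finset.card_eq_one.1 hone
      rw [hx, mem_singleton] at hb hzB0 ⊢
      have e1 : b.val = x.val := by rw [hb]
      have e2 : x.val = 0 := by rw [← hzB0]
      have e3 : a.val ≤ b.val := hab
      exact Fin.ext (by omega)
  have hsingle : ∀ B ∈ P.parts, B ≠ P.part z → B.card = 1 := by
    intro B hB hne
    by_contra hBc
    have hpos : 0 < B.card := card_pos.2 (P.nonempty_of_mem_parts hB)
    have h2c : 2 ≤ B.card := by omega
    obtain ⟨b, hb⟩ := P.nonempty_of_mem_parts hB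
    have hzB : z ∈ B := downward_closed h1 h2 hB h2c
      (by rw [Fin.le_def]; exact Nat.zero_le _) hb
    exact hne (P.eq_of_mem_parts hB hB0mem hzB hzB0)
  have hsum : ∑ B ∈ P.parts, B.card = n := by
    rw [P.sum_card_parts, card_univ, Fintype.card_fin]
  have herase : ∑ B ∈ P.parts.erase (P.part z), B.card = k - 1 := by
    rw [Finset.sum_congr rfl (fun B hB =>
        hsingle B (mem_of_mem_erase hB) (ne_of_mem_erase hB)),
      Finset.sum_const, smul_eq_mul, mul_one, card_erase_of_mem hB0mem, hcard]
  have hadd : (P.part z).card + ∑ B ∈ P.parts.erase (P.part z), B.card = ∑ B ∈ P.parts, B.card :=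
    Finset.add_sum_erase P.parts (fun B => B.card) hB0mem
  have hposB0 : 0 < (P.part z).card := card_pos.2 ⟨z, hzB0⟩
  have hcardB0 : (P.part z).card = n - k + 1 := by
    rw [herase, hsum] at hadd
    omega
  have hm : n - k < n := by omega
  have hsub : P.part z ⊆ Iic (⟨n - k, hm⟩ : Fin n) := by
    intro x hx
    have hIic : Iic x ⊆ P.part z := fun a ha => dc0 a x (mem_Iic.1 ha) hx
    have hle := Finset.card_le_card hIic
    rw [Fin.card_Iic, hcardB0] at hle
    rw [mem_Iic, Fin.le_def]
    show x.val ≤ n - k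
    omega
  have hB0 : P.part z = Iic (⟨n - k, hm⟩ : Fin n) := by
    apply Finset.eq_of_subset_of_card_le hsub
    rw [Fin.card_Iic, hcardB0]
  apply ext_of_inSameBlock
  intro i j
  rw [inSameBlock_canQ]
  constructor
  · rintro ⟨B, hB, hi, hj⟩
    by_cases hBe : B = P.part z
    · subst hBe
      rw [hB0, mem_Iic, Fin.le_def] at hi hj
      exact Or.inl ⟨hi, hj⟩
    · obtain ⟨x, hx⟩ := card_eq_one.1 (hsingle B hB hBe)
      rw [hx, mem_singleton] at hi hj
      exact Or.inr (hi.trans hj.symm)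
  · rintro (⟨hi, hj⟩ | rfl)
    · exact ⟨P.part z, hB0mem, by rw [hB0, mem_Iic, Fin.le_def]; exact hi,
        by rw [hB0, mem_Iic, Fin.le_def]; exact hj⟩
    · exact ⟨P.part i, P.part_mem.2 (mem_univ i), P.mem_part (mem_univ i),
        P.mem_part (mem_univ i)⟩

end Aux

/-- For `n ≥ 3` and `1 ≤ k ≤ n`, the `k`-block set partitions of `[n]`
avoiding both `1/23` and `13/2` are exactly those whose RGF is `1^{n-k+1} 2 3 ⋯ k`;
in particular there is exactly one such partition. -/
theorem stmt7 (n k : ℕ) (hn : 3 ≤ n) (hk1 : 1 ≤ k) (hkn : k ≤ n) :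
    (∀ P : SP n, (P.parts.card = k ∧ avoids1_23 P ∧ avoids13_2 P) ↔
      ∀ i : Fin n, rgf P i = if (i : ℕ) ≤ n - k then 1 else (i : ℕ) - (n - k) + 1) ∧
    Nat.card {P : SP n // P.parts.card = k ∧ avoids1_23 P ∧ avoids13_2 P} = 1 := by
  have hn0 : 0 < n := by omega
  have hm : n - k < n := by omega
  have hQcond : (canQ n (n - k)).parts.card = k ∧ avoids1_23 (canQ n (n - k)) ∧
      avoids13_2 (canQ n (n - k)) := by
    refine ⟨?_, Aux.avoids1_23_canQ, Aux.avoids13_2_canQ⟩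
    rw [Aux.card_parts_canQ hm]; omega
  have key : ∀ P : SP n, (P.parts.card = k ∧ avoids1_23 P ∧ avoids13_2 P) ↔
      P = canQ n (n - k) := by
    intro P
    constructor
    · rintro ⟨hc, h1, h2⟩; exact Aux.eq_canQ_of_avoid hk1 hkn hn0 hc h1 h2
    · rintro rfl; exact hQcond
  have key2 : ∀ P : SP n,
      (∀ i : Fin n, rgf P i = if (i : ℕ) ≤ n - k then 1 else (i : ℕ) - (n - k) + 1) ↔
        P = canQ n (n - k) := by
    intro P
    constructor
    · intro hw
      apply Aux.ext_of_inSameBlock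
      intro i j
      rw [← Aux.rgf_eq_iff (P := P), ← Aux.rgf_eq_iff (P := canQ n (n - k)),
        hw i, hw j, Aux.rgf_canQ hm i, Aux.rgf_canQ hm j]
    · rintro rfl; exact Aux.rgf_canQ hm
  constructor
  · intro P; rw [key P, ← key2 P]
  · rw [Nat.card_eq_one_iff_unique]
    constructor
    · constructor
      rintro ⟨P, hP⟩ ⟨P', hP'⟩
      exact Subtype.ext (((key P).1 hP).trans ((key P').1 hP').symm)
    · exact ⟨⟨canQ n (n - k), (key _).2 rfl⟩⟩
end

section
/- For n > k, the generating function for the lb statistic over k-block set partitions of [n] avoiding 1/23 equals 1 + q + q^2 + ⋯ + q^{k-1}; when n = k it equals 1. The same holds for the rs statistic. -/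
open Finset Polynomial

section Aux

def bigB (n l : ℕ) (m : Fin n) : Finset (Fin n) :=
  Finset.univ.filter (fun i => i.val < l ∨ i = m)

def smalls (n l : ℕ) (m : Fin n) : Finset (Fin n) :=
  Finset.univ.filter (fun i => l ≤ i.val ∧ i ≠ m)

def prts (n l : ℕ) (m : Fin n) : Finset (Finset (Fin n)) :=
  insert (bigB n l m) ((smalls n l m).image (fun s => {s}))

variable {n l : ℕ} {m : Fin n}

lemma mem_bigB {i : Fin n} : i ∈ bigB n l m ↔ (i.val < l ∨ i = m) := by
  simp [bigB]

lemma mem_smalls {i : Fin n} : i ∈ smalls n l m ↔ (l ≤ i.val ∧ i ≠ m) := by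
  simp [smalls]

lemma mem_prts {B : Finset (Fin n)} :
    B ∈ prts n l m ↔ B = bigB n l m ∨ ∃ s, (l ≤ s.val ∧ s ≠ m) ∧ B = {s} := by
  simp [prts, mem_smalls, eq_comm]

lemma prts_pd : ((prts n l m : Set (Finset (Fin n)))).PairwiseDisjoint id := by
  intro A hA B hB hAB
  simp only [mem_coe, mem_prts] at hA hB
  apply Finset.disjoint_left.2
  intro x hxA hxB
  simp only [id] at hxA hxB
  rcases hA with rfl | ⟨s, hs, rfl⟩ <;> rcases hB with rfl | ⟨t, ht, rfl⟩
  · exact hAB rfl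
  · rw [mem_bigB] at hxA; rw [mem_singleton] at hxB; subst hxB
    rcases hxA with h | h
    · omega
    · exact ht.2 h
  · rw [mem_bigB] at hxB; rw [mem_singleton] at hxA; subst hxA
    rcases hxB with h | h
    · omega
    · exact hs.2 h
  · rw [mem_singleton] at hxA hxB; exact hAB (by rw [← hxA, ← hxB])

def myP (n l : ℕ) (m : Fin n) : SP n :=
  if h : 0 < l ∧ l ≤ m.val then
    { parts := prts n l m
      supIndep := Finset.supIndep_iff_pairwiseDisjoint.2 prts_pd
      sup_parts := by
        apply le_antisymm (by simp)
        intro i _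
        rw [Finset.mem_sup]
        by_cases hi : i.val < l ∨ i = m
        · exact ⟨bigB n l m, by simp [mem_prts], mem_bigB.2 hi⟩
        · push_neg at hi
          exact ⟨{i}, mem_prts.2 (Or.inr ⟨i, ⟨by omega, hi.2⟩, rfl⟩), mem_singleton_self i⟩
      bot_notMem := by
        rw [mem_prts]
        rintro (hB | ⟨s, hs, hB⟩)
        · have : m ∈ bigB n l m := mem_bigB.2 (Or.inr rfl)
          rw [← hB] at this; simp at this
        · exact (singleton_ne_empty s) hB.symm }
  else ⊥

lemma myP_parts (hl : 0 < l) (hm : l ≤ m.val) : (myP n l m).parts = prts n l m := by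
  rw [myP, dif_pos ⟨hl, hm⟩]

lemma blockOf_eq {P : SP n} {B : Finset (Fin n)} (hB : B ∈ P.parts) {i : Fin n}
    (hi : i ∈ B) : blockOf P i = B := by
  have : P.parts.filter (fun C => i ∈ C) = {B} := by
    apply Finset.eq_singleton_iff_unique_mem.2
    refine ⟨Finset.mem_filter.2 ⟨hB, hi⟩, fun C hC => ?_⟩
    rw [Finset.mem_filter] at hC
    exact P.eq_of_mem_parts hC.1 hB hC.2 hi
  rw [blockOf, this, Finset.sup_singleton, id]

lemma inSameBlock_iff_of_mem {P : SP n} {B : Finset (Fin n)} (hB : B ∈ P.parts)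
    {i j : Fin n} (hj : j ∈ B) : inSameBlock P i j ↔ i ∈ B := by
  constructor
  · rintro ⟨C, hC, hiC, hjC⟩
    rwa [P.eq_of_mem_parts hC hB hjC hj] at hiC
  · exact fun hi => ⟨B, hB, hi, hj⟩

lemma bigB_min (hl : 0 < l) :
    (bigB n l m).min = ((⟨0, m.pos⟩ : Fin n) : WithTop (Fin n)) := by
  apply le_antisymm
  · exact Finset.min_le (by simp [bigB]; omega)
  · exact Finset.le_min (fun y hy => by exact_mod_cast Fin.mk_le_of_le_val (Nat.zero_le _))

lemma bigB_mem_prts : bigB n l m ∈ prts n l m := mem_prts.2 (Or.inl rfl)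

lemma bigB_ne_singleton (hl : 0 < l) (hm : l ≤ m.val) (s : Fin n) : bigB n l m ≠ {s} := by
  intro h
  have h0 : (⟨0, m.pos⟩ : Fin n) ∈ bigB n l m := mem_bigB.2 (Or.inl hl)
  have h1 : m ∈ bigB n l m := mem_bigB.2 (Or.inr rfl)
  rw [h, mem_singleton] at h0 h1
  rw [← h1] at h0
  have := congrArg Fin.val h0
  simp at this
  omega

def wrd (n l : ℕ) (m : Fin n) (i : Fin n) : ℕ :=
  if i.val < l ∨ i = m then 1 else if i.val < m.val then i.val - l + 2 else i.val - l + 1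

lemma rgf_myP (hl : 0 < l) (hm : l ≤ m.val) : rgf (myP n l m) = wrd n l m := by
  funext i
  rw [rgf, myP_parts hl hm]
  by_cases hi : i.val < l ∨ i = m
  · -- i in the big block
    have hb : blockOf (myP n l m) i = bigB n l m :=
      blockOf_eq (by rw [myP_parts hl hm]; exact bigB_mem_prts) (mem_bigB.2 hi)
    rw [hb]
    have : (prts n l m).filter (fun B => B.min ≤ (bigB n l m).min) = {bigB n l m} := by
      apply Finset.eq_singleton_iff_unique_mem.2
      refine ⟨Finset.mem_filter.2 ⟨bigB_mem_prts, le_refl _⟩, fun C hC => ?_⟩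
      rw [Finset.mem_filter, mem_prts] at hC
      rcases hC.1 with h | ⟨s, hs, rfl⟩
      · exact h
      · exfalso
        have := hC.2
        rw [Finset.min_singleton, bigB_min hl] at this
        rw [WithTop.coe_le_coe] at this
        have := Fin.le_def.1 this
        simp at this
        omega
    rw [this, Finset.card_singleton, wrd, if_pos hi]
  · push_neg at hi
    obtain ⟨hil, him⟩ := hi
    have hln : l < n := lt_of_le_of_lt hm m.isLt
    set lo : Fin n := ⟨l, hln⟩ with hlo
    have hb : blockOf (myP n l m) i = {i} := by
      apply blockOf_eq _ (mem_singleton_self i)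
      rw [myP_parts hl hm, mem_prts]
      exact Or.inr ⟨i, ⟨hil, him⟩, rfl⟩
    rw [hb, Finset.min_singleton]
    have hset : (prts n l m).filter (fun B => B.min ≤ (i : WithTop (Fin n)))
        = insert (bigB n l m) (((Finset.Icc lo i).erase m).image (fun s => {s})) := by
      ext B
      rw [Finset.mem_filter, mem_prts, Finset.mem_insert, Finset.mem_image]
      constructor
      · rintro ⟨h1 | ⟨s, hs, rfl⟩, h2⟩
        · exact Or.inl h1
        · refine Or.inr ⟨s, ?_, rfl⟩
          rw [Finset.min_singleton, WithTop.coe_le_coe] at h2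
          rw [Finset.mem_erase, Finset.mem_Icc]
          exact ⟨hs.2, Fin.mk_le_of_le_val hs.1, h2⟩
      · rintro (rfl | ⟨s, hs, rfl⟩)
        · refine ⟨Or.inl rfl, ?_⟩
          rw [bigB_min hl, WithTop.coe_le_coe]
          exact Fin.mk_le_of_le_val (Nat.zero_le _)
        · rw [Finset.mem_erase, Finset.mem_Icc] at hs
          refine ⟨Or.inr ⟨s, ⟨Fin.le_def.1 hs.2.1, hs.1⟩, rfl⟩, ?_⟩
          rw [Finset.min_singleton, WithTop.coe_le_coe]
          exact hs.2.2
    rw [hset, Finset.card_insert_of_notMem, Finset.card_image_of_injective _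
      (fun a b h => Finset.singleton_injective h)]
    · by_cases hmi : m.val < i.val
      · have hmm : m ∈ Finset.Icc lo i := by
          rw [Finset.mem_Icc]
          exact ⟨Fin.mk_le_of_le_val hm, Fin.le_def.2 (le_of_lt hmi)⟩
        rw [Finset.card_erase_of_mem hmm, Fin.card_Icc]
        rw [wrd, if_neg (by push_neg; omega), if_neg (by omega)]
        simp only [hlo]
        omega
      · have hmm : m ∉ Finset.Icc lo i := by
          rw [Finset.mem_Icc]
          rintro ⟨-, h2⟩
          have := Fin.le_def.1 h2
          have : m.val = i.val := by omega
          exact him (Fin.ext (by omega))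
        rw [Finset.erase_eq_of_notMem hmm, Fin.card_Icc]
        have : i.val < m.val := by
          rcases Nat.lt_trichotomy m.val i.val with h | h | h
          · omega
          · exact absurd (Fin.ext (by omega : i.val = m.val)) him
          · exact h
        rw [wrd, if_neg (by push_neg; omega), if_pos this]
        simp only [hlo]
        omega
    · rw [Finset.mem_image]
      rintro ⟨s, -, hB⟩
      exact bigB_ne_singleton hl hm s hB.symm


lemma wrd_pos (i : Fin n) : 1 ≤ wrd n l m i := by
  rw [wrd]; split_ifs <;> omega

lemma wrd_mono (hm : l ≤ m.val) {i j : Fin n} (hij : i < j) (hj : j ≠ m) :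
    wrd n l m i ≤ wrd n l m j := by
  have hij' : i.val < j.val := hij
  have hjm : j.val ≠ m.val := fun h => hj (Fin.ext h)
  rw [wrd, wrd]
  by_cases h1 : i.val < l ∨ i = m
  · rw [if_pos h1]; split_ifs <;> omega
  · push_neg at h1
    have him : i.val ≠ m.val := fun h => h1.2 (Fin.ext h)
    rw [if_neg (show ¬(i.val < l ∨ i = m) by push_neg; exact h1),
      if_neg (show ¬(j.val < l ∨ j = m) by push_neg; exact ⟨by omega, hj⟩)]
    split_ifs <;> omega

lemma wrd_m : wrd n l m m = 1 := by rw [wrd, if_pos (Or.inr rfl)]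

lemma lb_wrd (hl : 0 < l) (hm : l ≤ m.val) : lbStat (wrd n l m) = m.val - l := by
  rw [lbStat]
  rw [Finset.sum_eq_single_of_mem m (Finset.mem_univ m)]
  · -- the summand at m equals m.val - l
    have hset : (((Finset.univ.filter (fun i => i < m)).image (wrd n l m)).filter
        (fun v => wrd n l m m < v))
        = (Finset.range (m.val - l)).image (fun t => t + 2) := by
      ext v
      rw [Finset.mem_filter, Finset.mem_image, Finset.mem_image]
      constructor
      · rintro ⟨⟨i, hi, rfl⟩, hv⟩
        rw [Finset.mem_filter] at hi
        rw [wrd_m] at hv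
        have hibig : ¬(i.val < l ∨ i = m) := by
          intro h
          rw [wrd, if_pos h] at hv
          omega
        push_neg at hibig
        have hiv : i.val < m.val := hi.2
        refine ⟨i.val - l, Finset.mem_range.2 (by omega), ?_⟩
        rw [wrd, if_neg (by push_neg; exact hibig), if_pos hiv]
      · rintro ⟨t, ht, rfl⟩
        rw [Finset.mem_range] at ht
        have hlt : l + t < n := by have := m.isLt; omega
        set i : Fin n := ⟨l + t, hlt⟩ with hi
        have him : i ≠ m := by
          intro h
          have := congrArg Fin.val h
          simp [hi] at this
          omega
        refine ⟨⟨i, Finset.mem_filter.2 ⟨Finset.mem_univ _, Fin.lt_def.2 (by simp [hi]; omega)⟩, ?_⟩,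
          by rw [wrd_m]; omega⟩
        rw [wrd, if_neg (by push_neg; exact ⟨by simp [hi], him⟩), if_pos (by simp [hi]; omega)]
        simp [hi]
    rw [hset, Finset.card_image_of_injective _ (fun a b h => by omega), Finset.card_range]
  · intro j _ hj
    rw [Finset.card_eq_zero, Finset.filter_eq_empty_iff]
    rintro v hv
    rw [Finset.mem_image] at hv
    obtain ⟨i, hi, rfl⟩ := hv
    rw [Finset.mem_filter] at hi
    exact not_lt.2 (wrd_mono hm hi.2 hj)

lemma rs_wrd (hl : 0 < l) (hm : l ≤ m.val) : rsStat (wrd n l m) = m.val - l := by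
  have hln : l < n := lt_of_le_of_lt hm m.isLt
  rw [rsStat]
  have key : ∀ j : Fin n,
      (((Finset.univ.filter (fun i => j < i)).image (wrd n l m)).filter
        (fun v => v < wrd n l m j)).card
      = if l ≤ j.val ∧ j.val < m.val then 1 else 0 := by
    intro j
    by_cases hj : l ≤ j.val ∧ j.val < m.val
    · rw [if_pos hj]
      have hjm : j ≠ m := fun h => by rw [h] at hj; omega
      have hwj : wrd n l m j = j.val - l + 2 := by
        rw [wrd, if_neg (by push_neg; exact ⟨by omega, hjm⟩), if_pos hj.2]
      rw [Finset.card_eq_one]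
      refine ⟨1, ?_⟩
      apply Finset.eq_singleton_iff_unique_mem.2
      constructor
      · rw [Finset.mem_filter, Finset.mem_image]
        refine ⟨⟨m, Finset.mem_filter.2 ⟨Finset.mem_univ _, Fin.lt_def.2 hj.2⟩, wrd_m⟩, ?_⟩
        rw [hwj]; omega
      · rintro v hv
        rw [Finset.mem_filter, Finset.mem_image] at hv
        obtain ⟨⟨i, hi, rfl⟩, hvlt⟩ := hv
        rw [Finset.mem_filter] at hi
        have hji : j.val < i.val := hi.2
        rw [hwj] at hvlt
        by_cases hib : i.val < l ∨ i = m
        · rw [wrd, if_pos hib]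
        · exfalso
          push_neg at hib
          have him : i.val ≠ m.val := fun h => hib.2 (Fin.ext h)
          rw [wrd, if_neg (by push_neg; exact hib)] at hvlt
          split_ifs at hvlt <;> omega
    · rw [if_neg hj]
      rw [Finset.card_eq_zero, Finset.filter_eq_empty_iff]
      rintro v hv
      rw [Finset.mem_image] at hv
      obtain ⟨i, hi, rfl⟩ := hv
      rw [Finset.mem_filter] at hi
      have hji : j.val < i.val := hi.2
      push_neg at hj
      by_cases hjl : j.val < l
      · -- w j = 1 and everything is ≥ 1
        have : wrd n l m j = 1 := by rw [wrd, if_pos (Or.inl hjl)]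
        rw [this]
        exact not_lt.2 (wrd_pos i)
      · -- j ≥ m (since ¬(l ≤ j ∧ j < m) and l ≤ j); but j could equal m
        push_neg at hjl
        have hjm : m.val ≤ j.val := hj hjl
        by_cases hjem : j = m
        · rw [hjem, wrd_m]
          exact not_lt.2 (wrd_pos i)
        · have hjm' : m.val < j.val := by
            rcases Nat.lt_or_ge m.val j.val with h | h
            · exact h
            · exact absurd (Fin.ext (by omega : j.val = m.val)) hjem
          have him : i ≠ m := fun h => by rw [h] at hji; omega
          have hwj : wrd n l m j = j.val - l + 1 := by
            rw [wrd, if_neg (by push_neg; exact ⟨by omega, hjem⟩), if_neg (by omega)]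
          have hwi : wrd n l m i = i.val - l + 1 := by
            rw [wrd, if_neg (by push_neg; exact ⟨by omega, him⟩), if_neg (by omega)]
          rw [hwj, hwi]
          omega
  rw [Finset.sum_congr rfl (fun j _ => key j),
    ← Finset.card_filter (fun j : Fin n => l ≤ j.val ∧ j.val < m.val) Finset.univ]
  have : Finset.univ.filter (fun j : Fin n => l ≤ j.val ∧ j.val < m.val)
      = Finset.Ico (⟨l, hln⟩ : Fin n) m := by
    ext j
    rw [Finset.mem_filter, Finset.mem_Ico]
    constructor
    · rintro ⟨-, h1, h2⟩
      exact ⟨Fin.mk_le_of_le_val h1, Fin.lt_def.2 h2⟩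
    · rintro ⟨h1, h2⟩
      exact ⟨Finset.mem_univ _, Fin.le_def.1 h1, h2⟩
  rw [this, Fin.card_Ico]

lemma prts_card (hl : 0 < l) (hm : l ≤ m.val) : (prts n l m).card = n - l := by
  have hln : l < n := lt_of_le_of_lt hm m.isLt
  rw [prts, Finset.card_insert_of_notMem, Finset.card_image_of_injective _
    (fun a b h => Finset.singleton_injective h)]
  · have : smalls n l m = (Finset.Ici (⟨l, hln⟩ : Fin n)).erase m := by
      ext x
      rw [mem_smalls, Finset.mem_erase, Finset.mem_Ici]
      constructor
      · rintro ⟨h1, h2⟩; exact ⟨h2, Fin.mk_le_of_le_val h1⟩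
      · rintro ⟨h1, h2⟩; exact ⟨Fin.le_def.1 h2, h1⟩
    rw [this, Finset.card_erase_of_mem (Finset.mem_Ici.2 (Fin.mk_le_of_le_val hm)), Fin.card_Ici]
    simp only [Fin.isValue]
    omega
  · rw [Finset.mem_image]
    rintro ⟨s, -, hB⟩
    exact bigB_ne_singleton hl hm s hB.symm

lemma myP_avoids (hl : 0 < l) (hm : l ≤ m.val) : avoids1_23 (myP n l m) := by
  rintro ⟨a, b, c, hab, hbc, ⟨B, hB, hbB, hcB⟩, hnab⟩
  rw [myP_parts hl hm, mem_prts] at hB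
  rcases hB with rfl | ⟨s, hs, rfl⟩
  · -- B = bigB
    have hbm : b ≠ m := by
      rintro rfl
      rw [mem_bigB] at hcB
      rcases hcB with h | h
      · have := Fin.lt_def.1 hbc; omega
      · rw [h] at hbc; exact lt_irrefl _ hbc
    have hbl : b.val < l := by
      rw [mem_bigB] at hbB
      rcases hbB with h | h
      · exact h
      · exact absurd h hbm
    have haB : a ∈ bigB n l m := mem_bigB.2 (Or.inl (by have := Fin.lt_def.1 hab; omega))
    exact hnab ⟨bigB n l m, by rw [myP_parts hl hm]; exact bigB_mem_prts, haB,
      mem_bigB.2 (Or.inl hbl)⟩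
  · rw [mem_singleton] at hbB hcB
    rw [hbB, hcB] at hbc
    exact lt_irrefl _ hbc

lemma exists_two_lt {C : Finset (Fin n)} (h2 : 2 ≤ C.card) :
    ∃ x ∈ C, ∃ y ∈ C, x < y := by
  have hne : C.Nonempty := Finset.card_pos.1 (by omega)
  set y := C.max' hne with hy
  have hyC : y ∈ C := C.max'_mem hne
  have hne' : (C.erase y).Nonempty := by
    rw [← Finset.card_pos, Finset.card_erase_of_mem hyC]; omega
  set x := (C.erase y).max' hne' with hx
  have hxE : x ∈ C.erase y := (C.erase y).max'_mem hne'
  have hxC : x ∈ C := Finset.mem_of_mem_erase hxE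
  refine ⟨x, hxC, y, hyC, ?_⟩
  exact lt_of_le_of_ne (C.le_max' x hxC) (Finset.ne_of_mem_erase hxE)

lemma forward {k : ℕ} (hk : k < n) (P : SP n) (hcard : P.parts.card = k)
    (hav : avoids1_23 P) : ∃ m : Fin n, n - k ≤ m.val ∧ P = myP n (n - k) m := by
  -- there is a block with at least 2 elements
  have hex : ∃ B ∈ P.parts, 2 ≤ B.card := by
    by_contra hcon
    push_neg at hcon
    have hone : ∀ B ∈ P.parts, B.card = 1 := fun B hB => by
      have h1 : 0 < B.card := Finset.card_pos.2 (P.nonempty_of_mem_parts hB)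
      have := hcon B hB
      omega
    have hsum := P.sum_card_parts
    rw [Finset.sum_congr rfl hone, Finset.sum_const, smul_eq_mul, mul_one, hcard,
      Finset.card_univ, Fintype.card_fin] at hsum
    omega
  obtain ⟨B, hB, h2⟩ := hex
  have hBne : B.Nonempty := Finset.card_pos.1 (by omega)
  set c := B.max' hBne with hc
  have hcB : c ∈ B := B.max'_mem hBne
  have hEne : (B.erase c).Nonempty := by
    rw [← Finset.card_pos, Finset.card_erase_of_mem hcB]; omega
  set b := (B.erase c).max' hEne with hb
  have hbE : b ∈ B.erase c := (B.erase c).max'_mem hEne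
  have hbB : b ∈ B := Finset.mem_of_mem_erase hbE
  have hbc : b < c := lt_of_le_of_ne (B.le_max' b hbB) (Finset.ne_of_mem_erase hbE)
  -- everything below b is in B
  have hlow : ∀ a : Fin n, a < b → a ∈ B := by
    intro a ha
    by_contra hna
    refine hav ⟨a, b, c, ha, hbc, ⟨B, hB, hbB, hcB⟩, ?_⟩
    rw [inSameBlock_iff_of_mem hB hbB]
    exact hna
  -- explicit description of B
  have hmem_iff : ∀ x : Fin n, x ∈ B ↔ (x.val ≤ b.val ∨ x = c) := by
    intro x
    constructor
    · intro hx
      by_cases hxc : x = c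
      · exact Or.inr hxc
      · exact Or.inl (Fin.le_def.1 ((B.erase c).le_max' x (Finset.mem_erase.2 ⟨hxc, hx⟩)))
    · rintro (hx | rfl)
      · rcases eq_or_lt_of_le (Fin.le_def.2 hx : x ≤ b) with h' | hlt
        · rwa [h']
        · exact hlow x hlt
      · exact hcB
  -- all other parts are singletons
  have hsing : ∀ C ∈ P.parts, C ≠ B → ∃ s, C = {s} := by
    intro C hC hCB
    by_cases hone : C.card = 1
    · exact Finset.card_eq_one.1 hone
    exfalso
    have hcon : 2 ≤ C.card := by
      have := Finset.card_pos.2 (P.nonempty_of_mem_parts hC)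
      omega
    obtain ⟨x, hxC, y, hyC, hxy⟩ := exists_two_lt hcon
    have hxB : x ∉ B := by
      intro hxB
      exact hCB (P.eq_of_mem_parts hC hB hxC hxB)
    have hbx : b < x := by
      rw [hmem_iff] at hxB
      push_neg at hxB
      exact Fin.lt_def.2 hxB.1
    refine hav ⟨b, x, y, hbx, hxy, ⟨C, hC, hxC, hyC⟩, ?_⟩
    rw [inSameBlock_iff_of_mem hC hxC]
    intro hbC
    exact hCB (P.eq_of_mem_parts hC hB hbC hbB)
  -- cardinality computation
  have hBcard : B.card = b.val + 2 := by
    have : B = insert c (Finset.Iic b) := by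
      ext x
      rw [Finset.mem_insert, Finset.mem_Iic, hmem_iff]
      constructor
      · rintro (h | h)
        · exact Or.inr (Fin.mk_le_of_le_val h)
        · exact Or.inl h
      · rintro (h | h)
        · exact Or.inr h
        · exact Or.inl (Fin.le_def.1 h)
    rw [this, Finset.card_insert_of_notMem (by
      rw [Finset.mem_Iic]; exact fun h => absurd (lt_of_le_of_lt h hbc) (lt_irrefl c)),
      Fin.card_Iic]
  have hk1 : 1 ≤ k := by rw [← hcard]; exact Finset.card_pos.2 ⟨B, hB⟩
  have hsum := P.sum_card_parts
  rw [← Finset.add_sum_erase _ _ hB] at hsum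
  have herase : ∑ C ∈ P.parts.erase B, C.card = k - 1 := by
    rw [Finset.sum_congr rfl (fun C hC => ?_), Finset.sum_const, smul_eq_mul, mul_one,
      Finset.card_erase_of_mem hB, hcard]
    obtain ⟨s, rfl⟩ := hsing C (Finset.mem_of_mem_erase hC) (Finset.ne_of_mem_erase hC)
    exact Finset.card_singleton s
  rw [herase, hBcard, Finset.card_univ, Fintype.card_fin] at hsum
  -- so b.val + 1 = n - k
  have hbval : b.val + 1 = n - k := by omega
  have hm : n - k ≤ c.val := by
    have := Fin.lt_def.1 hbc
    omega
  refine ⟨c, hm, ?_⟩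
  apply Finpartition.ext
  rw [myP_parts (by omega) hm]
  have hBeq : B = bigB n (n - k) c := by
    ext x
    rw [mem_bigB, hmem_iff]
    constructor
    · rintro (h | h)
      · exact Or.inl (by omega)
      · exact Or.inr h
    · rintro (h | h)
      · exact Or.inl (by omega)
      · exact Or.inr h
  ext C
  rw [mem_prts]
  constructor
  · intro hC
    by_cases hCB : C = B
    · exact Or.inl (by rw [hCB, hBeq])
    · obtain ⟨s, rfl⟩ := hsing C hC hCB
      have hsB : s ∉ B := by
        intro hsB
        exact hCB (P.eq_of_mem_parts hC hB (Finset.mem_singleton_self s) hsB)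
      rw [hmem_iff] at hsB
      push_neg at hsB
      exact Or.inr ⟨s, ⟨by omega, hsB.2⟩, rfl⟩
  · rintro (rfl | ⟨s, hs, rfl⟩)
    · rwa [← hBeq]
    · have hsB : s ∉ B := by
        rw [hmem_iff]
        push_neg
        exact ⟨by omega, hs.2⟩
      obtain ⟨D, hD, hsD⟩ := P.exists_mem (Finset.mem_univ s)
      have hDB : D ≠ B := fun h => hsB (h ▸ hsD)
      obtain ⟨t, rfl⟩ := hsing D hD hDB
      rw [Finset.mem_singleton] at hsD
      rwa [← hsD] at hD


open Classical in
lemma genPoly_eq_of_lt {n k : ℕ} (h : k < n) (stat : (Fin n → ℕ) → ℕ)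
    (hstat : ∀ m : Fin n, n - k ≤ m.val → stat (wrd n (n - k) m) = m.val - (n - k)) :
    genPoly n k avoids1_23 stat = ∑ j ∈ Finset.range k, (X : Polynomial ℕ) ^ j := by
  have hl : 0 < n - k := by omega
  have hGm : ∀ j : Fin k, n - k + j.val < n := fun j => by have := j.isLt; omega
  set G : Fin k → SP n := fun j => myP n (n - k) ⟨n - k + j.val, hGm j⟩ with hG
  have hmj : ∀ j : Fin k, n - k ≤ (⟨n - k + j.val, hGm j⟩ : Fin n).val := fun j => by
    simp
  have hstatG : ∀ j : Fin k, stat (rgf (G j)) = j.val := by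
    intro j
    rw [hG, rgf_myP hl (hmj j), hstat _ (hmj j)]
    simp
  have hS : Finset.univ.filter (fun P : SP n => P.parts.card = k ∧ avoids1_23 P)
      = Finset.univ.image G := by
    ext P
    rw [Finset.mem_filter, Finset.mem_image]
    constructor
    · rintro ⟨-, hcard, hav⟩
      obtain ⟨m, hm, rfl⟩ := forward h P hcard hav
      have hjlt : m.val - (n - k) < k := by have := m.isLt; omega
      refine ⟨⟨m.val - (n - k), hjlt⟩, Finset.mem_univ _, ?_⟩
      rw [hG]
      show myP n (n - k) ⟨n - k + (m.val - (n - k)), hGm ⟨m.val - (n - k), hjlt⟩⟩ = myP n (n - k) m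
      congr 1
      apply Fin.ext
      show n - k + (m.val - (n - k)) = m.val
      omega
    · rintro ⟨j, -, rfl⟩
      refine ⟨Finset.mem_univ _, ?_, myP_avoids hl (hmj j)⟩
      rw [hG]
      show (myP n (n - k) _).parts.card = k
      rw [myP_parts hl (hmj j), prts_card hl (hmj j)]
      omega
  rw [genPoly, hS, Finset.sum_image ?_]
  · rw [Finset.sum_congr rfl (fun j _ => by rw [hstatG j])]
    exact Fin.sum_univ_eq_sum_range (fun j => (X : Polynomial ℕ) ^ j) k
  · intro x _ y _ hxy
    have := congrArg (fun P => stat (rgf P)) hxy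
    rw [hstatG x, hstatG y] at this
    exact Fin.ext this

lemma bot_avoids : avoids1_23 (⊥ : SP n) := by
  rintro ⟨a, b, c, hab, hbc, ⟨B, hB, hbB, hcB⟩, -⟩
  rw [Finpartition.parts_bot, Finset.mem_map] at hB
  obtain ⟨s, -, rfl⟩ := hB
  simp only [Function.Embedding.coeFn_mk, Finset.mem_singleton] at hbB hcB
  rw [hbB, hcB] at hbc
  exact lt_irrefl _ hbc

lemma singleton_mem_parts_bot (i : Fin n) : ({i} : Finset (Fin n)) ∈ (⊥ : SP n).parts := by
  rw [Finpartition.parts_bot, Finset.mem_map]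
  exact ⟨i, Finset.mem_univ _, rfl⟩

lemma rgf_bot : rgf (⊥ : SP n) = fun i => i.val + 1 := by
  funext i
  have hb : blockOf (⊥ : SP n) i = {i} :=
    blockOf_eq (singleton_mem_parts_bot i) (Finset.mem_singleton_self i)
  rw [rgf, hb, Finset.min_singleton]
  have : (⊥ : SP n).parts.filter (fun B => B.min ≤ (i : WithTop (Fin n)))
      = (Finset.Iic i).map ⟨singleton, Finset.singleton_injective⟩ := by
    ext B
    rw [Finset.mem_filter, Finpartition.parts_bot, Finset.mem_map, Finset.mem_map]
    simp only [Function.Embedding.coeFn_mk]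
    constructor
    · rintro ⟨⟨s, -, rfl⟩, h2⟩
      rw [Finset.min_singleton, WithTop.coe_le_coe] at h2
      exact ⟨s, Finset.mem_Iic.2 h2, rfl⟩
    · rintro ⟨s, hs, rfl⟩
      rw [Finset.mem_Iic] at hs
      exact ⟨⟨s, Finset.mem_univ _, rfl⟩,
        by rw [Finset.min_singleton, WithTop.coe_le_coe]; exact hs⟩
  rw [this, Finset.card_map, Fin.card_Iic]

lemma eq_bot_of_card {P : SP n} (hcard : P.parts.card = n) : P = ⊥ := by
  have hone : ∀ B ∈ P.parts, B.card = 1 := by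
    by_contra hcon
    push_neg at hcon
    obtain ⟨B, hB, hBne⟩ := hcon
    have h2 : 2 ≤ B.card := by
      have := Finset.card_pos.2 (P.nonempty_of_mem_parts hB)
      omega
    have hsum := P.sum_card_parts
    rw [← Finset.add_sum_erase _ _ hB] at hsum
    have h3 : (P.parts.erase B).card ≤ ∑ C ∈ P.parts.erase B, C.card := by
      rw [Finset.card_eq_sum_ones]
      exact Finset.sum_le_sum (fun C hC => Finset.card_pos.2
        (P.nonempty_of_mem_parts (Finset.mem_of_mem_erase hC)))
    rw [Finset.card_erase_of_mem hB, hcard, Finset.card_univ, Fintype.card_fin] at *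
    omega
  apply Finpartition.ext
  rw [Finpartition.parts_bot]
  ext C
  rw [Finset.mem_map]
  constructor
  · intro hC
    obtain ⟨s, rfl⟩ := Finset.card_eq_one.1 (hone C hC)
    exact ⟨s, Finset.mem_univ _, rfl⟩
  · rintro ⟨s, -, rfl⟩
    obtain ⟨D, hD, hsD⟩ := P.exists_mem (Finset.mem_univ s)
    obtain ⟨t, rfl⟩ := Finset.card_eq_one.1 (hone D hD)
    rw [Finset.mem_singleton] at hsD
    simp only [Function.Embedding.coeFn_mk]
    rwa [← hsD] at hD

lemma stats_zero_of_strictMono {w : Fin n → ℕ} (hw : ∀ i j : Fin n, i < j → w i < w j) :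
    lbStat w = 0 ∧ rsStat w = 0 := by
  constructor
  · apply Finset.sum_eq_zero
    intro j _
    rw [Finset.card_eq_zero, Finset.filter_eq_empty_iff]
    rintro v hv
    rw [Finset.mem_image] at hv
    obtain ⟨i, hi, rfl⟩ := hv
    rw [Finset.mem_filter] at hi
    exact not_lt.2 (le_of_lt (hw i j hi.2))
  · apply Finset.sum_eq_zero
    intro j _
    rw [Finset.card_eq_zero, Finset.filter_eq_empty_iff]
    rintro v hv
    rw [Finset.mem_image] at hv
    obtain ⟨i, hi, rfl⟩ := hv
    rw [Finset.mem_filter] at hi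
    exact not_lt.2 (le_of_lt (hw j i hi.2))

open Classical in
lemma genPoly_eq_of_eq {n k : ℕ} (h : k = n) (stat : (Fin n → ℕ) → ℕ)
    (hstat : stat (rgf (⊥ : SP n)) = 0) :
    genPoly n k avoids1_23 stat = 1 := by
  subst h
  have hS : Finset.univ.filter (fun P : SP k => P.parts.card = k ∧ avoids1_23 P)
      = {(⊥ : SP k)} := by
    ext P
    rw [Finset.mem_filter, Finset.mem_singleton]
    constructor
    · rintro ⟨-, hcard, -⟩
      exact eq_bot_of_card hcard
    · rintro rfl
      refine ⟨Finset.mem_univ _, ?_, bot_avoids⟩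
      rw [Finpartition.parts_bot, Finset.card_map, Finset.card_univ, Fintype.card_fin]
  rw [genPoly, hS, Finset.sum_singleton, hstat, pow_zero]

end Aux

/-- For `n > k`, the generating function for the `lb` statistic over
`k`-block partitions of `[n]` avoiding `1/23` equals `1 + q + ⋯ + q^{k-1}`; when `n = k`
it equals `1`. The same holds for the `rs` statistic. -/
theorem stmt11 (n k : ℕ) :
    (k < n →
      genPoly n k avoids1_23 lbStat = ∑ j ∈ Finset.range k, (X : Polynomial ℕ) ^ j ∧
      genPoly n k avoids1_23 rsStat = ∑ j ∈ Finset.range k, (X : Polynomial ℕ) ^ j) ∧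
    (k = n →
      genPoly n k avoids1_23 lbStat = 1 ∧ genPoly n k avoids1_23 rsStat = 1) := by
  constructor
  · intro h
    have hl : 0 < n - k := by omega
    exact ⟨genPoly_eq_of_lt h lbStat (fun m hm => lb_wrd hl hm),
      genPoly_eq_of_lt h rsStat (fun m hm => rs_wrd hl hm)⟩
  · intro h
    have hz := stats_zero_of_strictMono (w := fun i : Fin n => i.val + 1)
      (fun i j hij => by have := Fin.lt_def.1 hij; omega)
    exact ⟨genPoly_eq_of_eq h lbStat (by rw [rgf_bot]; exact hz.1),
      genPoly_eq_of_eq h rsStat (by rw [rgf_bot]; exact hz.2)⟩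
end
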